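/- arXiv:1510.02316 — 7 statements merged into one kernel-verified Lean document; each statement's English description precedes it below -/
import Mathlib

section
/- Let a ≥ 0, d > 0, and 0 < v ≤ sqrt((1/2)·d·a). Then the supremum of φ(x,y) = (v·x + a·y)/(x² + y² - a² - v²) over Ω = [a+d, ∞) × [0, v] equals v/d, attained at x = a+d, y = v. -/
theorem stmt_3 (a d v : ℝ) (ha : 0 ≤ a) (hd : 0 < d) (hv0 : 0 < v)
    (hv : v ≤ Real.sqrt ((1 / 2) * d * a)) :
    IsGreatest
      {z : ℝ | ∃ x y : ℝ, a + d ≤ x ∧ 0 ≤ y ∧ y ≤ v ∧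
        z = (v * x + a * y) / (x ^ 2 + y ^ 2 - a ^ 2 - v ^ 2)} (v / d) ∧
    (v * (a + d) + a * v) / ((a + d) ^ 2 + v ^ 2 - a ^ 2 - v ^ 2) = v / d := by
  have hs : (0:ℝ) ≤ (1/2) * d * a := by positivity
  have hv2 : v ^ 2 ≤ (1/2) * d * a := by
    have := Real.sq_sqrt hs
    nlinarith [Real.sqrt_nonneg ((1/2)*d*a)]
  have ha' : 0 < a := by nlinarith
  have heq : (v * (a + d) + a * v) / ((a + d) ^ 2 + v ^ 2 - a ^ 2 - v ^ 2) = v / d := by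
    rw [div_eq_div_iff (by nlinarith) hd.ne']
    ring
  refine ⟨⟨⟨a + d, v, le_refl _, hv0.le, le_refl _, ?_⟩, ?_⟩, heq⟩
  · exact heq.symm
  · rintro z ⟨x, y, hx, hy0, hyv, rfl⟩
    have hden : 0 < x ^ 2 + y ^ 2 - a ^ 2 - v ^ 2 := by nlinarith
    rw [div_le_div_iff₀ hden hd]
    nlinarith [mul_nonneg (mul_nonneg hv0.le (sub_nonneg.2 hx)) (by nlinarith : (0:ℝ) ≤ x + a),
      mul_nonneg (sub_nonneg.2 hyv) (by nlinarith [mul_le_mul_of_nonneg_left hyv hv0.le] : (0:ℝ) ≤ d * a - v * (v + y))]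
end

section
/- Let a ≥ 0, d > 0, and sqrt((1/2)·d·a) < v < sqrt(d·(2a+d)). Then the supremum of φ(x,y) = (v·x + a·y)/(x² + y² - a² - v²) over Ω = [a+d, ∞) × [0, v] equals (1/2)·(v·(a+d) + sqrt(d·(2a+d))·sqrt(a² + v²))/(d·(2a+d) - v²). -/
set_option maxHeartbeats 1000000 in
theorem stmt_4 (a d v : ℝ) (ha : 0 ≤ a) (hd : 0 < d)
    (hv1 : Real.sqrt ((1 / 2) * d * a) < v) (hv2 : v < Real.sqrt (d * (2 * a + d))) :
    IsGreatest
      {z : ℝ | ∃ x y : ℝ, a + d ≤ x ∧ 0 ≤ y ∧ y ≤ v ∧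
        z = (v * x + a * y) / (x ^ 2 + y ^ 2 - a ^ 2 - v ^ 2)}
      ((1 / 2) * (v * (a + d) + Real.sqrt (d * (2 * a + d)) * Real.sqrt (a ^ 2 + v ^ 2)) /
        (d * (2 * a + d) - v ^ 2)) := by
  have hv0 : 0 < v := lt_of_le_of_lt (Real.sqrt_nonneg _) hv1
  have hS : 0 < d * (2 * a + d) := by positivity
  have hv2' : v ^ 2 < d * (2 * a + d) := by
    have := (Real.lt_sqrt hv0.le).mp hv2
    linarith
  have hv1' : (1 / 2) * d * a < v ^ 2 := by
    have := (Real.sqrt_lt' hv0).mp hv1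
    linarith
  set R := Real.sqrt (d * (2 * a + d)) * Real.sqrt (a ^ 2 + v ^ 2) with hRdef
  have hR0 : 0 ≤ R := mul_nonneg (Real.sqrt_nonneg _) (Real.sqrt_nonneg _)
  have hR2 : R ^ 2 = (d * (2 * a + d)) * (a ^ 2 + v ^ 2) := by
    rw [hRdef, mul_pow, Real.sq_sqrt hS.le, Real.sq_sqrt (by positivity)]
  have hD : 0 < d * (2 * a + d) - v ^ 2 := by linarith
  set M := (1 / 2) * (v * (a + d) + R) / (d * (2 * a + d) - v ^ 2) with hMdef
  have hMD : 2 * M * (d * (2 * a + d) - v ^ 2) = v * (a + d) + R := by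
    rw [hMdef]; field_simp
  have hM0 : 0 < M := by
    rw [hMdef]
    have h : 0 < v * (a + d) + R := by nlinarith
    positivity
  clear_value R M
  clear hMdef hRdef hv1 hv2
  have K : 4 * M ^ 2 * (d * (2 * a + d) - v ^ 2) = 4 * M * v * (a + d) + a ^ 2 := by
    have h1 : (2 * M * (d * (2 * a + d) - v ^ 2)) ^ 2 = (v * (a + d) + R) ^ 2 := by
      rw [hMD]
    have KD : (4 * M ^ 2 * (d * (2 * a + d) - v ^ 2)) * (d * (2 * a + d) - v ^ 2)
        = (4 * M * v * (a + d) + a ^ 2) * (d * (2 * a + d) - v ^ 2) := by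
      linear_combination h1 - 2 * v * (a + d) * hMD + hR2
    exact mul_right_cancel₀ hD.ne' KD
  have h2 : v ≤ 2 * M * (a + d) := by
    have hMD2 : 2 * M * (a + d) * (d * (2 * a + d) - v ^ 2) = (a + d) * (v * (a + d) + R) := by
      linear_combination (a + d) * hMD
    have h3 : v * (d * (2 * a + d) - v ^ 2) ≤ 2 * M * (a + d) * (d * (2 * a + d) - v ^ 2) := by
      rw [hMD2]
      nlinarith [mul_nonneg (by linarith : (0:ℝ) ≤ a + d) hR0,
        mul_nonneg hv0.le (by positivity : (0:ℝ) ≤ a ^ 2 + v ^ 2)]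
    exact le_of_mul_le_mul_right h3 hD
  have hav : a ≤ 2 * M * v := by
    have hvR2 : (v * R) ^ 2 = v ^ 2 * (d * (2 * a + d)) * (a ^ 2 + v ^ 2) := by
      linear_combination v ^ 2 * hR2
    have key : (2 * a + d) * (a * d - v ^ 2) ≤ v * R := by
      rcases le_or_gt (a * d - v ^ 2) 0 with h | h
      · nlinarith [mul_nonneg hv0.le hR0, hS]
      · have hsq : ((2 * a + d) * (a * d - v ^ 2)) ^ 2 ≤ (v * R) ^ 2 := by
          nlinarith [hvR2, mul_nonneg (mul_nonneg (mul_nonneg ha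
            (by linarith : (0:ℝ) ≤ 2 * a + d))
            (by linarith : (0:ℝ) ≤ v ^ 2 - 1 / 2 * d * a)) hD.le]
        nlinarith [hsq, mul_nonneg hv0.le hR0,
          mul_pos (by linarith : (0:ℝ) < 2 * a + d) h]
    have hMD3 : 2 * M * v * (d * (2 * a + d) - v ^ 2) = v * (v * (a + d) + R) := by
      linear_combination v * hMD
    have h3 : a * (d * (2 * a + d) - v ^ 2) ≤ 2 * M * v * (d * (2 * a + d) - v ^ 2) := by
      rw [hMD3]
      nlinarith [key]
    exact le_of_mul_le_mul_right h3 hD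
  constructor
  · -- membership: x = a + d, y with 2 M y = a
    obtain ⟨y0, hy0⟩ : ∃ y0 : ℝ, 2 * M * y0 = a := ⟨a / (2 * M), by field_simp⟩
    have hy0n : 0 ≤ y0 := by nlinarith [hy0, hM0]
    have hy0v : y0 ≤ v := by nlinarith [hy0, hav, hM0]
    have hden : (0:ℝ) < (a + d) ^ 2 + y0 ^ 2 - a ^ 2 - v ^ 2 := by
      nlinarith [sq_nonneg y0]
    refine ⟨a + d, y0, le_refl _, hy0n, hy0v, ?_⟩
    rw [eq_div_iff hden.ne']
    have hG4 : 4 * M * (M * ((a + d) ^ 2 + y0 ^ 2 - a ^ 2 - v ^ 2)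
        - (v * (a + d) + a * y0)) = 0 := by
      linear_combination K + (2 * M * y0 - a) * hy0
    have h4M : (4 : ℝ) * M ≠ 0 := by positivity
    have := (mul_eq_zero.mp hG4).resolve_left h4M
    linarith
  · rintro z ⟨x, y, hx, hy0, hyv, rfl⟩
    have hden : (0:ℝ) < x ^ 2 + y ^ 2 - a ^ 2 - v ^ 2 := by
      nlinarith [sq_nonneg y, mul_nonneg (by linarith : (0:ℝ) ≤ x - (a + d))
        (by linarith : (0:ℝ) ≤ x + (a + d))]
    rw [div_le_iff₀ hden]
    have hQ : 0 ≤ 4 * M * (M * (x ^ 2 + y ^ 2 - a ^ 2 - v ^ 2) - (v * x + a * y)) := by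
      nlinarith [K, sq_nonneg (2 * M * y - a), mul_nonneg hM0.le (sq_nonneg (x - (a + d))),
        mul_nonneg (mul_nonneg hM0.le (by linarith : (0:ℝ) ≤ 2 * M * (a + d) - v))
          (by linarith : (0:ℝ) ≤ x - (a + d))]
    nlinarith [hQ, hM0]
end

section
/- Fix d > 0 and 0 ≤ v < d. Define ϰ(D) = 2v/d if v ≤ (1/2)·sqrt(d·(D-2d)), and ϰ(D) = (v·D + sqrt(d·(D-d))·sqrt((D-2d)² + 4v²))/(2·(d·(D-d) - v²)) otherwise. Then ϰ is nonincreasing on [2d, ∞). -/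
private lemma sqS (d v D : ℝ) (hd : 0 < d) (hD : 2 * d ≤ D) :
    (Real.sqrt (d * (D - d)) * Real.sqrt ((D - 2 * d) ^ 2 + 4 * v ^ 2)) ^ 2
      = d * (D - d) * ((D - 2 * d) ^ 2 + 4 * v ^ 2) := by
  rw [mul_pow, Real.sq_sqrt (by nlinarith : (0:ℝ) ≤ d * (D - d)),
    Real.sq_sqrt (by positivity)]

private lemma apos (d v D : ℝ) (hd : 0 < d) (hv0 : 0 ≤ v) (hvd : v < d) (hD : 2 * d ≤ D) :
    0 < d * (D - d) - v ^ 2 := by nlinarith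

/-- the explicit value is a root of the quadratic. -/
private lemma rootA (d v D : ℝ) (hd : 0 < d) (hv0 : 0 ≤ v) (hvd : v < d) (hD : 2 * d ≤ D) :
    (d * (D - d) - v ^ 2) *
        ((v * D + Real.sqrt (d * (D - d)) * Real.sqrt ((D - 2 * d) ^ 2 + 4 * v ^ 2)) /
          (2 * (d * (D - d) - v ^ 2))) ^ 2
      - v * D * ((v * D + Real.sqrt (d * (D - d)) * Real.sqrt ((D - 2 * d) ^ 2 + 4 * v ^ 2)) /
          (2 * (d * (D - d) - v ^ 2)))
      = (D - 2 * d) ^ 2 / 4 := by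
  have ha := apos d v D hd hv0 hvd hD
  have hS := sqS d v D hd hD
  set S := Real.sqrt (d * (D - d)) * Real.sqrt ((D - 2 * d) ^ 2 + 4 * v ^ 2) with hSdef
  have key : S ^ 2 = (d * (D - d) - v ^ 2) * (D - 2 * d) ^ 2 + v ^ 2 * D ^ 2 := by
    rw [hS]; ring
  have ha' : (2 * (d * (D - d) - v ^ 2)) ≠ 0 := by positivity
  field_simp
  nlinarith [key, sq_nonneg S]

/-- lower bound: the explicit value is at least 2v/d for all D ≥ 2d. -/
private lemma lowB (d v D : ℝ) (hd : 0 < d) (hv0 : 0 ≤ v) (hvd : v < d) (hD : 2 * d ≤ D) :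
    2 * v / d ≤ (v * D + Real.sqrt (d * (D - d)) * Real.sqrt ((D - 2 * d) ^ 2 + 4 * v ^ 2)) /
        (2 * (d * (D - d) - v ^ 2)) := by
  have ha := apos d v D hd hv0 hvd hD
  have hS := sqS d v D hd hD
  set S := Real.sqrt (d * (D - d)) * Real.sqrt ((D - 2 * d) ^ 2 + 4 * v ^ 2) with hSdef
  have hS0 : 0 ≤ S := by rw [hSdef]; positivity
  rw [div_le_div_iff₀ hd (by positivity)]
  have main : v * (3 * d * D - 4 * d ^ 2 - 4 * v ^ 2) ≤ d * S := by
    rcases le_or_gt (v * (3 * d * D - 4 * d ^ 2 - 4 * v ^ 2)) 0 with h | h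
    · exact h.trans (by positivity)
    · have he : d ^ 3 * (D - d) * ((D - 2 * d) ^ 2 + 4 * v ^ 2)
          - (v * (3 * d * D - 4 * d ^ 2 - 4 * v ^ 2)) ^ 2
          = (4 * v ^ 2 - d * (D - 2 * d)) ^ 2 * (d * (D - d) - v ^ 2) := by ring
      have hsq : (v * (3 * d * D - 4 * d ^ 2 - 4 * v ^ 2)) ^ 2 ≤ (d * S) ^ 2 := by
        have : (d * S) ^ 2 = d ^ 3 * (D - d) * ((D - 2 * d) ^ 2 + 4 * v ^ 2) := by
          rw [mul_pow, hS]; ring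
        nlinarith [sq_nonneg (4 * v ^ 2 - d * (D - 2 * d))]
      nlinarith [mul_nonneg hd.le hS0]
  nlinarith [main]

set_option maxHeartbeats 1600000 in
theorem stmt_5 (d v : ℝ) (hd : 0 < d) (hv0 : 0 ≤ v) (hvd : v < d)
    (κ : ℝ → ℝ)
    (hκ : ∀ D : ℝ, κ D =
      if v ≤ (1 / 2) * Real.sqrt (d * (D - 2 * d)) then 2 * v / d
      else (v * D + Real.sqrt (d * (D - d)) * Real.sqrt ((D - 2 * d) ^ 2 + 4 * v ^ 2)) /
        (2 * (d * (D - d) - v ^ 2))) :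
    AntitoneOn κ (Set.Ici (2 * d)) := by
  intro D1 hD1 D2 hD2 h12
  simp only [Set.mem_Ici] at hD1 hD2
  rw [hκ D1, hκ D2]
  by_cases hb1 : v ≤ (1 / 2) * Real.sqrt (d * (D1 - 2 * d))
  · have hb2 : v ≤ (1 / 2) * Real.sqrt (d * (D2 - 2 * d)) := by
      refine hb1.trans ?_
      gcongr
    rw [if_pos hb1, if_pos hb2]
  · rw [if_neg hb1]
    by_cases hb2 : v ≤ (1 / 2) * Real.sqrt (d * (D2 - 2 * d))
    · rw [if_pos hb2]
      exact lowB d v D1 hd hv0 hvd hD1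
    · rw [if_neg hb2]
      -- both in the second branch
      have hbr2 : d * (D2 - 2 * d) < 4 * v ^ 2 := by
        push_neg at hb2
        have h0 : 0 ≤ d * (D2 - 2 * d) := by nlinarith
        have := Real.sq_sqrt h0
        nlinarith [Real.sqrt_nonneg (d * (D2 - 2 * d))]
      have ha1 := apos d v D1 hd hv0 hvd hD1
      have ha2 := apos d v D2 hd hv0 hvd hD2
      set S1 := Real.sqrt (d * (D1 - d)) * Real.sqrt ((D1 - 2 * d) ^ 2 + 4 * v ^ 2) with hS1def
      set S2 := Real.sqrt (d * (D2 - d)) * Real.sqrt ((D2 - 2 * d) ^ 2 + 4 * v ^ 2) with hS2def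
      set x := (v * D2 + S2) / (2 * (d * (D2 - d) - v ^ 2)) with hxdef
      -- x is a root of the quadratic at D2
      have hx2 : (d * (D2 - d) - v ^ 2) * x ^ 2 - v * D2 * x = (D2 - 2 * d) ^ 2 / 4 :=
        rootA d v D2 hd hv0 hvd hD2
      have hxlb : 2 * v / d ≤ x := lowB d v D2 hd hv0 hvd hD2
      have hx0 : 0 ≤ x := le_trans (by positivity) hxlb
      have hdx : v ≤ d * x := by
        rw [div_le_iff₀ hd] at hxlb; nlinarith
      -- step 1 : f_{D1}(x) ≤ 0
      have h1 : (D1 + D2 - 4 * d) / 4 ≤ d * x ^ 2 - v * x := by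
        have hxx : 2 * v ^ 2 / d ≤ x * (d * x - v) := by
          rw [div_le_iff₀ hd] at hxlb ⊢
          nlinarith
        rw [div_le_iff₀ hd] at hxx
        have : D1 + D2 - 4 * d ≤ 2 * (D2 - 2 * d) := by linarith
        nlinarith
      have hprod : 0 ≤ (D2 - D1) * ((d * x ^ 2 - v * x) - (D1 + D2 - 4 * d) / 4) :=
        mul_nonneg (by linarith) (by linarith)
      have step1 : (d * (D1 - d) - v ^ 2) * x ^ 2 - v * D1 * x ≤ (D1 - 2 * d) ^ 2 / 4 := by
        nlinarith [hx2, hprod]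
      -- step 2 : conclude x ≤ κ-value at D1
      have hS1 := sqS d v D1 hd hD1
      have hS10 : 0 ≤ S1 := by rw [hS1def]; positivity
      have key1 : S1 ^ 2 = (d * (D1 - d) - v ^ 2) * (D1 - 2 * d) ^ 2 + v ^ 2 * D1 ^ 2 := by
        rw [hS1]; ring
      clear_value x S1 S2
      set t := 2 * (d * (D1 - d) - v ^ 2) * x - v * D1 with htdef
      clear_value t
      have e1 : S1 ^ 2 - t ^ 2 = (4 * (d * (D1 - d) - v ^ 2)) *
          ((D1 - 2 * d) ^ 2 / 4 - ((d * (D1 - d) - v ^ 2) * x ^ 2 - v * D1 * x)) := by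
        rw [key1, htdef]; ring
      have hsq : t ^ 2 ≤ S1 ^ 2 := by
        have h4 : (0:ℝ) ≤ 4 * (d * (D1 - d) - v ^ 2) := by positivity
        have h5 : (0:ℝ) ≤ (D1 - 2 * d) ^ 2 / 4 - ((d * (D1 - d) - v ^ 2) * x ^ 2 - v * D1 * x) := by
          linarith
        have h6 := mul_nonneg h4 h5
        linarith [e1, h6]
      have h2 : t ≤ S1 := by nlinarith [hsq, hS10]
      rw [le_div_iff₀ (by positivity : (0:ℝ) < 2 * (d * (D1 - d) - v ^ 2))]
      linarith
end

section
/- Fix d > 0 and 0 ≤ v < d. With ϰ(D) defined as in the a priori tan Θ theorem, the maximum of ϰ(D) over D ∈ [2d, ∞) is attained at D = 2d and equals 2vd/(d² - v²) = tan(2·arctan(v/d)). -/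
set_option maxHeartbeats 1000000 in
theorem stmt_6 (d v : ℝ) (hd : 0 < d) (hv0 : 0 ≤ v) (hvd : v < d)
    (κ : ℝ → ℝ)
    (hκ : ∀ D : ℝ, κ D =
      if v ≤ (1 / 2) * Real.sqrt (d * (D - 2 * d)) then 2 * v / d
      else (v * D + Real.sqrt (d * (D - d)) * Real.sqrt ((D - 2 * d) ^ 2 + 4 * v ^ 2)) /
        (2 * (d * (D - d) - v ^ 2))) :
    (∀ D ∈ Set.Ici (2 * d), κ D ≤ κ (2 * d)) ∧
    κ (2 * d) = 2 * v * d / (d ^ 2 - v ^ 2) ∧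
    2 * v * d / (d ^ 2 - v ^ 2) = Real.tan (2 * Real.arctan (v / d)) := by
  have hdv2 : v ^ 2 < d ^ 2 := by nlinarith
  have hden : (0:ℝ) < d ^ 2 - v ^ 2 := by linarith
  -- value at 2d
  have hval : κ (2 * d) = 2 * v * d / (d ^ 2 - v ^ 2) := by
    rw [hκ]
    have h0 : d * (2 * d - 2 * d) = 0 := by ring
    rw [h0, Real.sqrt_zero]
    rcases eq_or_lt_of_le hv0 with h | h
    · simp [← h]
    · rw [if_neg (by linarith)]
      have h1 : d * (2 * d - d) = d * d := by ring
      rw [h1, Real.sqrt_mul_self hd.le]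
      have h2 : (2 * d - 2 * d) ^ 2 + 4 * v ^ 2 = (2 * v) ^ 2 := by ring
      rw [h2, Real.sqrt_sq (by linarith)]
      rw [div_eq_div_iff (ne_of_gt (by nlinarith)) hden.ne']
      ring
  refine ⟨?_, hval, ?_⟩
  · intro D hD
    rw [Set.mem_Ici] at hD
    rw [hval, hκ]
    split_ifs with hif
    · rw [div_le_div_iff₀ hd hden]
      nlinarith [mul_nonneg hv0 (mul_nonneg hv0 hv0)]
    · push_neg at hif
      have ht0 : 0 ≤ D - 2 * d := by linarith
      have hdt0 : 0 ≤ d * (D - 2 * d) := mul_nonneg hd.le ht0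
      have hv : 0 < v := lt_of_le_of_lt (by positivity) hif
      have hsq : Real.sqrt (d * (D - 2 * d)) < 2 * v := by linarith
      have hdt : d * (D - 2 * d) < 4 * v ^ 2 := by
        have := Real.sq_sqrt hdt0
        nlinarith [Real.sqrt_nonneg (d * (D - 2 * d))]
      set a := Real.sqrt (d * (D - d)) with ha_def
      set b := Real.sqrt ((D - 2 * d) ^ 2 + 4 * v ^ 2) with hb_def
      have hA0 : 0 ≤ d * (D - d) := mul_nonneg hd.le (by linarith)
      have ha2 : a ^ 2 = d * (D - d) := Real.sq_sqrt hA0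
      have hb2 : b ^ 2 = (D - 2 * d) ^ 2 + 4 * v ^ 2 := Real.sq_sqrt (by positivity)
      have ha : 0 ≤ a := Real.sqrt_nonneg _
      have hb : 0 ≤ b := Real.sqrt_nonneg _
      have hden2 : 0 < 2 * (d * (D - d) - v ^ 2) := by nlinarith
      -- key bound on the product of square roots
      have hab : a * b * (d ^ 2 - v ^ 2) ≤
          v * ((D - 2 * d) * (3 * d ^ 2 + v ^ 2) + 2 * d * (d ^ 2 - v ^ 2)) := by
        have hrhs : 0 ≤ v * ((D - 2 * d) * (3 * d ^ 2 + v ^ 2) + 2 * d * (d ^ 2 - v ^ 2)) := by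
          apply mul_nonneg hv.le
          nlinarith
        apply le_of_pow_le_pow_left₀ two_ne_zero hrhs
        have hcoef : 0 ≤ d ^ 6 + 7 * d ^ 4 * v ^ 2 + 11 * d ^ 2 * v ^ 4 - 3 * v ^ 6 := by
          nlinarith [sq_nonneg (d * v), mul_pos (mul_pos hden hden) hden]
        have hu : 0 ≤ 4 * v ^ 2 - d * (D - 2 * d) := by nlinarith
        have hP : d * ((D - 2 * d) + d) * ((D - 2 * d) ^ 2 + 4 * v ^ 2) * (d ^ 2 - v ^ 2) ^ 2
            ≤ (v * ((D - 2 * d) * (3 * d ^ 2 + v ^ 2) + 2 * d * (d ^ 2 - v ^ 2))) ^ 2 := by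
          nlinarith [mul_nonneg (mul_nonneg (by positivity : (0:ℝ) ≤ 4 * v ^ 2 * d * (d ^ 2 - v ^ 2) ^ 2) (sq_nonneg (D - 2 * d))) hu,
            mul_nonneg (mul_nonneg (by nlinarith [mul_nonneg hden.le (add_nonneg (sq_nonneg d) (sq_nonneg v)), sq_nonneg (d*v)] : (0:ℝ) ≤ 8 * d ^ 2 * v ^ 2 * (d ^ 4 - v ^ 4)) ht0) hu,
            mul_nonneg (mul_nonneg (by positivity : (0:ℝ) ≤ 4 * v ^ 2) hcoef) (sq_nonneg (D - 2 * d)),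
            mul_pos (mul_pos hv hv) hd]
        calc (a * b * (d ^ 2 - v ^ 2)) ^ 2
            = (a ^ 2) * (b ^ 2) * (d ^ 2 - v ^ 2) ^ 2 := by ring
          _ = d * ((D - 2 * d) + d) * ((D - 2 * d) ^ 2 + 4 * v ^ 2) * (d ^ 2 - v ^ 2) ^ 2 := by
              rw [ha2, hb2]; ring
          _ ≤ (v * ((D - 2 * d) * (3 * d ^ 2 + v ^ 2) + 2 * d * (d ^ 2 - v ^ 2))) ^ 2 := hP
      rw [div_le_div_iff₀ hden2 hden]
      linarith [hab]
  · rw [Real.tan_two_mul, Real.tan_arctan]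
    have hd' : d ≠ 0 := hd.ne'
    have h1 : 1 - (v / d) ^ 2 ≠ 0 := by
      field_simp
      intro h
      rcases div_eq_zero_iff.mp h with h | h <;> nlinarith
    field_simp
end

section
/- Let 0 < d ≤ D/2 and 0 ≤ v < sqrt(d·D). Define r = v·tan((1/2)·arctan(2v/(D - d))). Then r < d. -/
open Real

lemma stmt_8_aux (d s v w : ℝ) (hd : 0 < d) (hs : 0 < s) (hv0 : 0 < v)
    (hw1 : 1 ≤ w) (hE : (s * w) ^ 2 = s ^ 2 + 4 * v ^ 2)
    (hv2 : v ^ 2 < d * (s + d)) :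
    v ^ 2 * (w - 1) < d ^ 2 * (w + 1) := by
  rcases le_or_gt (v ^ 2) (d ^ 2) with hc | hc
  · have h1 : v ^ 2 * (w - 1) ≤ d ^ 2 * (w - 1) :=
      mul_le_mul_of_nonneg_right hc (by linarith)
    nlinarith
  · have hB2 : (s * w * (v ^ 2 - d ^ 2)) ^ 2 = (s ^ 2 + 4 * v ^ 2) * (v ^ 2 - d ^ 2) ^ 2 := by
      rw [show (s * w * (v ^ 2 - d ^ 2)) ^ 2 = (s * w) ^ 2 * (v ^ 2 - d ^ 2) ^ 2 from by ring, hE]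
    have hid : (s * (v ^ 2 + d ^ 2)) ^ 2 - (s ^ 2 + 4 * v ^ 2) * (v ^ 2 - d ^ 2) ^ 2
        = 4 * v ^ 2 * (d * (s + d) - v ^ 2) * (s * d + v ^ 2 - d ^ 2) := by ring
    have hP : 0 < 4 * v ^ 2 * (d * (s + d) - v ^ 2) * (s * d + v ^ 2 - d ^ 2) := by
      apply mul_pos (mul_pos (by positivity) (by linarith))
      nlinarith
    have hdiff : (s * w * (v ^ 2 - d ^ 2)) ^ 2 < (s * (v ^ 2 + d ^ 2)) ^ 2 := by
      rw [hB2]; linarith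
    have hAB : s * w * (v ^ 2 - d ^ 2) < s * (v ^ 2 + d ^ 2) :=
      lt_of_pow_lt_pow_left₀ 2 (by positivity) hdiff
    have hmul : s * (v ^ 2 * (w - 1)) < s * (d ^ 2 * (w + 1)) := by nlinarith
    exact lt_of_mul_lt_mul_left hmul hs.le

theorem stmt_8 (D d v : ℝ) (hd : 0 < d) (hD : d ≤ D / 2) (hv0 : 0 ≤ v)
    (hv : v < Real.sqrt (d * D)) :
    v * Real.tan ((1 / 2) * Real.arctan (2 * v / (D - d))) < d := by
  rcases eq_or_lt_of_le hv0 with h0 | hv0'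
  · rw [← h0]; simpa using hd
  have hds : d ≤ D - d := by linarith
  have hs : 0 < D - d := lt_of_lt_of_le hd hds
  set s := D - d with hsdef
  set t := 2 * v / s with htdef
  have ht : 0 < t := by positivity
  have hts : t * s = 2 * v := by rw [htdef]; exact div_mul_cancel₀ _ hs.ne'
  set x := (1 / 2) * Real.arctan t with hxdef
  have harc : Real.arctan t = 2 * x := by rw [hxdef]; ring
  have harcpos : 0 < Real.arctan t := by
    have := Real.arctan_strictMono ht
    rwa [Real.arctan_zero] at this
  have hx1 : 0 < x := by rw [hxdef]; linarith
  have hx2 : x < π / 4 := by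
    have := Real.arctan_lt_pi_div_two t
    rw [hxdef]; linarith
  have hC : 0 < Real.cos x :=
    Real.cos_pos_of_mem_Ioo ⟨by linarith [Real.pi_pos], by linarith [Real.pi_pos]⟩
  have hS : 0 ≤ Real.sin x :=
    Real.sin_nonneg_of_nonneg_of_le_pi hx1.le (by linarith [Real.pi_pos])
  set w := Real.sqrt (1 + t ^ 2) with hwdef
  have hw : 0 < w := Real.sqrt_pos.mpr (by positivity)
  have hwsq : w ^ 2 = 1 + t ^ 2 := Real.sq_sqrt (by positivity)
  have hw1 : 1 ≤ w := by nlinarith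
  have hsin : 2 * Real.sin x * Real.cos x = t / w := by
    rw [← Real.sin_two_mul, ← harc, Real.sin_arctan]
  have hcos : 2 * Real.cos x ^ 2 - 1 = 1 / w := by
    rw [← Real.cos_two_mul, ← harc, Real.cos_arctan]
  have hpyth := Real.sin_sq_add_cos_sq x
  have hv2 : v ^ 2 < d * (s + d) := by
    have h1 := (Real.lt_sqrt hv0).mp hv
    have hDs : D = s + d := by rw [hsdef]; ring
    nlinarith
  have hE : (s * w) ^ 2 = s ^ 2 + 4 * v ^ 2 := by
    have h4 : (t * s) ^ 2 = 4 * v ^ 2 := by rw [hts]; ring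
    calc (s * w) ^ 2 = s ^ 2 * w ^ 2 := by ring
      _ = s ^ 2 * (1 + t ^ 2) := by rw [hwsq]
      _ = s ^ 2 + (t * s) ^ 2 := by ring
      _ = s ^ 2 + 4 * v ^ 2 := by rw [h4]
  clear_value s t x w
  clear hv hD hxdef hwdef htdef hsdef harc hwsq hts hsin
  have hC2 : Real.cos x ^ 2 * (2 * w) = w + 1 := by
    field_simp at hcos
    linear_combination hcos
  have hS2 : Real.sin x ^ 2 * (2 * w) = w - 1 := by
    linear_combination 2 * w * hpyth - hC2
  have hmain := stmt_8_aux d s v w hd hs hv0' hw1 hE hv2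
  have key : v * Real.sin x < d * Real.cos x := by
    have hsq : (v * Real.sin x) ^ 2 < (d * Real.cos x) ^ 2 := by
      have h1 : (v * Real.sin x) ^ 2 * (2 * w) = v ^ 2 * (w - 1) := by
        rw [show (v * Real.sin x) ^ 2 * (2 * w) = v ^ 2 * (Real.sin x ^ 2 * (2 * w)) from by ring,
          hS2]
      have h2 : (d * Real.cos x) ^ 2 * (2 * w) = d ^ 2 * (w + 1) := by
        rw [show (d * Real.cos x) ^ 2 * (2 * w) = d ^ 2 * (Real.cos x ^ 2 * (2 * w)) from by ring,
          hC2]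
      have h3 : (v * Real.sin x) ^ 2 * (2 * w) < (d * Real.cos x) ^ 2 * (2 * w) := by
        rw [h1, h2]; exact hmain
      exact lt_of_mul_lt_mul_right h3 (by positivity)
    exact lt_of_pow_lt_pow_left₀ 2 (by positivity) hsq
  calc v * Real.tan x = v * Real.sin x / Real.cos x := by
        rw [Real.tan_eq_sin_div_cos]; ring
    _ < d * Real.cos x / Real.cos x := by gcongr
    _ = d := by field_simp
end

section
/- Let a ≥ 0, d > 0, v > 0 with v² < d(2a+d), and let μ ∈ (0,1), x ≥ a+d, y ∈ [0,v] satisfy μ/(1-μ²) ≤ (v·x + a·y)/(x² + y² - a² - v²). Then μ ≤ tan((1/2)·arctan ϰ(2a+2d, d, v)). -/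
set_option maxHeartbeats 1000000 in
theorem stmt_11 (a d v μ x y : ℝ) (ha : 0 ≤ a) (hd : 0 < d) (hv0 : 0 < v)
    (hv : v ^ 2 < d * (2 * a + d)) (hμ0 : 0 < μ) (hμ1 : μ < 1)
    (hx : a + d ≤ x) (hy0 : 0 ≤ y) (hyv : y ≤ v)
    (h : μ / (1 - μ ^ 2) ≤ (v * x + a * y) / (x ^ 2 + y ^ 2 - a ^ 2 - v ^ 2))
    (κ : ℝ → ℝ → ℝ → ℝ)
    (hκ : ∀ D d v : ℝ, κ D d v =
      if v ≤ (1 / 2) * Real.sqrt (d * (D - 2 * d)) then 2 * v / d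
      else (v * D + Real.sqrt (d * (D - d)) * Real.sqrt ((D - 2 * d) ^ 2 + 4 * v ^ 2)) /
        (2 * (d * (D - d) - v ^ 2))) :
    μ ≤ Real.tan ((1 / 2) * Real.arctan (κ (2 * a + 2 * d) d v)) := by
  set k := κ (2 * a + 2 * d) d v with hkdef
  have hDx : 0 < x ^ 2 + y ^ 2 - a ^ 2 - v ^ 2 := by nlinarith
  have h1μ : 0 < 1 - μ ^ 2 := by nlinarith
  -- main inequality : 2*(v*x+a*y) ≤ k * Dx
  have hk : 2 * (v * x + a * y) ≤ k * (x ^ 2 + y ^ 2 - a ^ 2 - v ^ 2) := by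
    rw [hkdef, hκ]
    split_ifs with hcond
    · -- case 1 : 2 v^2 ≤ a d
      have hz : d * (2 * a + 2 * d - 2 * d) = 2 * (a * d) := by ring
      rw [hz] at hcond
      have hsq : Real.sqrt (2 * (a * d)) ^ 2 = 2 * (a * d) :=
        Real.sq_sqrt (by positivity)
      have hq : 2 * v ^ 2 ≤ a * d := by nlinarith [Real.sqrt_nonneg (2 * (a * d))]
      rw [div_mul_eq_mul_div, le_div_iff₀ hd]
      have n1 : 0 ≤ v * ((x - (a + d)) * (x + a)) :=
        mul_nonneg hv0.le (mul_nonneg (by linarith) (by linarith))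
      have n2 : 0 ≤ (v - y) * (a * d - v * y - v ^ 2) := by
        apply mul_nonneg (by linarith)
        nlinarith [mul_le_mul_of_nonneg_left hyv hv0.le]
      nlinarith [n1, n2]
    · -- case 2
      have hS : (0:ℝ) < d * (2 * a + d) := by positivity
      have hSv : 0 < d * (2 * a + d) - v ^ 2 := by linarith
      set s := Real.sqrt (d * (2 * a + d)) with hsdef
      set r := Real.sqrt (a ^ 2 + v ^ 2) with hrdef
      have hs0 : 0 ≤ s := Real.sqrt_nonneg _
      have hr0 : 0 ≤ r := Real.sqrt_nonneg _
      have hs2 : s ^ 2 = d * (2 * a + d) := Real.sq_sqrt hS.le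
      have hr2 : r ^ 2 = a ^ 2 + v ^ 2 := Real.sq_sqrt (by positivity)
      have e1 : d * (2 * a + 2 * d - d) = d * (2 * a + d) := by ring
      have e2 : (2 * a + 2 * d - 2 * d) ^ 2 + 4 * v ^ 2 = 4 * (a ^ 2 + v ^ 2) := by ring
      have e3 : Real.sqrt (4 * (a ^ 2 + v ^ 2)) = 2 * r := by
        rw [Real.sqrt_mul (by norm_num), hrdef,
          show (4:ℝ) = 2 ^ 2 by norm_num, Real.sqrt_sq (by norm_num)]
      rw [e1, e2, e3, ← hsdef]
      have hkeq : (v * (2 * a + 2 * d) + s * (2 * r)) / (2 * (d * (2 * a + d) - v ^ 2))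
          = (v * (a + d) + s * r) / (d * (2 * a + d) - v ^ 2) := by
        rw [div_eq_div_iff (by linarith) (by linarith)]; ring
      rw [hkeq, div_mul_eq_mul_div, le_div_iff₀ hSv]
      set A := v * (a + d) with hAdef
      have hA : 0 < A + s * r := by
        have : 0 < A := by positivity
        nlinarith [mul_nonneg hs0 hr0]
      -- Lemma A : (v*x+a*y)*(S+y^2-v^2) ≤ (A+a*y)*Dx
      have lemA : (v * x + a * y) * (d * (2 * a + d) + y ^ 2 - v ^ 2)
          ≤ (A + a * y) * (x ^ 2 + y ^ 2 - a ^ 2 - v ^ 2) := by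
        have h1 : 0 ≤ (x - (a + d)) ^ 2 * (A + a * y) := by positivity
        have h2 : 0 ≤ (x - (a + d)) * (2 * (a + d) * (a * y)
            + v * (2 * a ^ 2 + 2 * a * d + d ^ 2) + v * ((v - y) * (v + y))) := by
          apply mul_nonneg (by linarith)
          have t0 : 0 ≤ v * ((v - y) * (v + y)) :=
            mul_nonneg hv0.le (mul_nonneg (by linarith) (by linarith))
          have t1 : 0 ≤ 2 * (a + d) * (a * y) := by positivity
          have t2 : 0 ≤ v * (2 * a ^ 2 + 2 * a * d + d ^ 2) := by positivity
          linarith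
        nlinarith [h1, h2]
      -- Lemma B : 2*(A+a*y)*(S-v^2) ≤ (A+s*r)*(S+y^2-v^2)
      have lemB : 2 * (A + a * y) * (d * (2 * a + d) - v ^ 2)
          ≤ (A + s * r) * (d * (2 * a + d) + y ^ 2 - v ^ 2) := by
        have hsr : (s * r) ^ 2 = (d * (2 * a + d)) * (a ^ 2 + v ^ 2) := by
          rw [mul_pow, hs2, hr2]
        have hAA : (s * r) ^ 2 - A ^ 2 = a ^ 2 * (d * (2 * a + d) - v ^ 2) := by
          rw [hsr, hAdef]; ring
        have key : (A + s * r) * ((A + s * r) * (d * (2 * a + d) + y ^ 2 - v ^ 2)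
              - 2 * (A + a * y) * (d * (2 * a + d) - v ^ 2))
            = ((A + s * r) * y - a * (d * (2 * a + d) - v ^ 2)) ^ 2 := by
          linear_combination (d * (2 * a + d) - v ^ 2) * hAA
        nlinarith [key, sq_nonneg ((A + s * r) * y - a * (d * (2 * a + d) - v ^ 2)), hA]
      -- combine
      have hDy : 0 < d * (2 * a + d) + y ^ 2 - v ^ 2 := by nlinarith
      have c1 := mul_le_mul_of_nonneg_left lemA (by linarith :
        (0:ℝ) ≤ 2 * (d * (2 * a + d) - v ^ 2))
      have c2 := mul_le_mul_of_nonneg_right lemB hDx.le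
      have c3 : 2 * (v * x + a * y) * (d * (2 * a + d) - v ^ 2)
            * (d * (2 * a + d) + y ^ 2 - v ^ 2)
          ≤ (A + s * r) * (x ^ 2 + y ^ 2 - a ^ 2 - v ^ 2)
            * (d * (2 * a + d) + y ^ 2 - v ^ 2) := by nlinarith [c1, c2]

      exact le_of_mul_le_mul_right c3 hDy
  -- from h : 2*μ ≤ k*(1-μ^2)
  have h3 : μ * (x ^ 2 + y ^ 2 - a ^ 2 - v ^ 2) ≤ (v * x + a * y) * (1 - μ ^ 2) :=
    (div_le_div_iff₀ h1μ hDx).mp h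
  have h5 : 2 * μ ≤ k * (1 - μ ^ 2) := by
    have e2 : 2 * (v * x + a * y) * (1 - μ ^ 2)
        ≤ k * (x ^ 2 + y ^ 2 - a ^ 2 - v ^ 2) * (1 - μ ^ 2) :=
      mul_le_mul_of_nonneg_right hk h1μ.le
    have c : 2 * μ * (x ^ 2 + y ^ 2 - a ^ 2 - v ^ 2)
        ≤ k * (1 - μ ^ 2) * (x ^ 2 + y ^ 2 - a ^ 2 - v ^ 2) := by nlinarith [h3, e2]
    exact le_of_mul_le_mul_right c hDx
  have h6 : Real.tan (2 * Real.arctan μ) ≤ k := by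
    rw [Real.tan_two_mul, Real.tan_arctan]
    rw [div_le_iff₀ h1μ]
    linarith
  have hm0 : 0 < Real.arctan μ := by
    have := Real.arctan_strictMono hμ0
    rwa [Real.arctan_zero] at this
  have hm1 : Real.arctan μ < Real.pi / 4 := by
    have := Real.arctan_strictMono hμ1
    rwa [Real.arctan_one] at this
  have hpi : 0 < Real.pi := Real.pi_pos
  have harc : 2 * Real.arctan μ ≤ Real.arctan k := by
    have := Real.arctan_strictMono.monotone h6
    rwa [Real.arctan_tan (by linarith) (by linarith)] at this
  have hmem1 : Real.arctan μ ∈ Set.Ioo (-(Real.pi / 2)) (Real.pi / 2) :=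
    ⟨Real.neg_pi_div_two_lt_arctan μ, Real.arctan_lt_pi_div_two μ⟩
  have hmem2 : (1 / 2) * Real.arctan k ∈ Set.Ioo (-(Real.pi / 2)) (Real.pi / 2) := by
    constructor
    · have := Real.neg_pi_div_two_lt_arctan k; linarith
    · have := Real.arctan_lt_pi_div_two k; linarith
  calc μ = Real.tan (Real.arctan μ) := (Real.tan_arctan μ).symm
    _ ≤ Real.tan ((1 / 2) * Real.arctan k) :=
        Real.strictMonoOn_tan.monotoneOn hmem1 hmem2 (by linarith)
end

section
/- Let A₀, A₁ be self-adjoint operators on finite-dimensional Hilbert spaces H₀, H₁, and B : H₁ → H₀ a linear map. Suppose X : H₀ → H₁ satisfies the Riccati equation X A₀ - A₁ X + X B X = B*. Then Λ₀ := (I + X*X)^{1/2}(A₀ + BX)(I + X*X)^{-1/2} is self-adjoint on H₀. -/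
open ContinuousLinearMap

theorem stmt_13 {H₀ H₁ : Type*}
    [NormedAddCommGroup H₀] [InnerProductSpace ℂ H₀] [FiniteDimensional ℂ H₀]
    [NormedAddCommGroup H₁] [InnerProductSpace ℂ H₁] [FiniteDimensional ℂ H₁]
    (A₀ : H₀ →L[ℂ] H₀) (A₁ : H₁ →L[ℂ] H₁) (B : H₁ →L[ℂ] H₀)
    (hA₀ : IsSelfAdjoint A₀) (hA₁ : IsSelfAdjoint A₁)
    (X : H₀ →L[ℂ] H₁)
    (hRic : X ∘L A₀ - A₁ ∘L X + X ∘L B ∘L X = ContinuousLinearMap.adjoint B)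
    -- S = (I + X*X)^{1/2}: a positive self-adjoint square root of I + X*X
    (S T : H₀ →L[ℂ] H₀) (hSsa : IsSelfAdjoint S) (hSpos : S.IsPositive)
    (hSsq : S ∘L S = 1 + (ContinuousLinearMap.adjoint X) ∘L X)
    -- T = S⁻¹ = (I + X*X)^{-1/2}
    (hST : S ∘L T = 1) (hTS : T ∘L S = 1) :
    IsSelfAdjoint (S ∘L (A₀ + B ∘L X) ∘L T) := by
  set M : H₀ →L[ℂ] H₀ := A₀ + B ∘L X with hM
  -- T is self-adjoint
  have hTadj : ContinuousLinearMap.adjoint T = T := by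
    have h1 : ContinuousLinearMap.adjoint T ∘L S = 1 := by
      have := congrArg ContinuousLinearMap.adjoint hST
      rw [adjoint_comp, hSsa.adjoint_eq] at this
      rwa [show ContinuousLinearMap.adjoint (1 : H₀ →L[ℂ] H₀) = 1 from by
        rw [← ContinuousLinearMap.star_eq_adjoint, star_one]] at this
    calc ContinuousLinearMap.adjoint T
        = ContinuousLinearMap.adjoint T ∘L (S ∘L T) := by rw [hST]; simp [ContinuousLinearMap.one_def]
      _ = (ContinuousLinearMap.adjoint T ∘L S) ∘L T := by rw [comp_assoc]
      _ = T := by rw [h1]; simp [ContinuousLinearMap.one_def]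
  -- Riccati rearranged
  have hXM : X ∘L M = ContinuousLinearMap.adjoint B + A₁ ∘L X := by
    rw [hM, comp_add, ← hRic, ← comp_assoc]
    abel
  -- key: S² M is self-adjoint
  have hSSM : (S ∘L S) ∘L M = M + ContinuousLinearMap.adjoint X ∘L (X ∘L M) := by
    rw [hSsq, add_comp, comp_assoc]; simp [ContinuousLinearMap.one_def]
  have key : ContinuousLinearMap.adjoint M ∘L (S ∘L S) = (S ∘L S) ∘L M := by
    have h2 : ContinuousLinearMap.adjoint ((S ∘L S) ∘L M)
        = ContinuousLinearMap.adjoint M ∘L (S ∘L S) := by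
      rw [adjoint_comp, adjoint_comp, hSsa.adjoint_eq]
    rw [← h2, hSSM, hXM]
    simp only [hM, adjoint_comp, map_add, adjoint_adjoint, adjoint_comp,
      hA₀.adjoint_eq, hA₁.adjoint_eq, add_comp, comp_add, comp_assoc]
    abel
  -- finish
  rw [IsSelfAdjoint]
  calc star (S ∘L M ∘L T)
      = ContinuousLinearMap.adjoint (S ∘L M ∘L T) := rfl
    _ = (ContinuousLinearMap.adjoint T ∘L ContinuousLinearMap.adjoint M) ∘L S := by
        rw [adjoint_comp, adjoint_comp, hSsa.adjoint_eq]
    _ = T ∘L (ContinuousLinearMap.adjoint M ∘L S) := by rw [hTadj, comp_assoc]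
    _ = T ∘L (ContinuousLinearMap.adjoint M ∘L (S ∘L (S ∘L T))) := by
        rw [hST]; simp [ContinuousLinearMap.one_def]
    _ = T ∘L ((ContinuousLinearMap.adjoint M ∘L (S ∘L S)) ∘L T) := by
        rw [comp_assoc, comp_assoc]
    _ = T ∘L (((S ∘L S) ∘L M) ∘L T) := by rw [key]
    _ = ((T ∘L S) ∘L S) ∘L (M ∘L T) := by
        simp only [comp_assoc]
    _ = S ∘L M ∘L T := by rw [hTS]; simp [ContinuousLinearMap.one_def]
end
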